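/- Define φ : ℝ² → ℝ by φ(z₁, z₂) = (z₁ z₂)² if z₁ ≥ 0 and z₂ ≥ 0, and φ(z₁, z₂) = −(z₁ z₂)² otherwise. Then: (a) φ is differentiable on all of ℝ², with ∇φ(z) = 0 at every z with z₁ z₂ = 0 (in particular at the origin); and (b) {z ∈ ℝ² : φ(z) ≤ 0} = ℝ² \ {z ∈ ℝ² : z₁ > 0 and z₂ > 0}, i.e. the sublevel set {φ ≤ 0} is exactly the complement of the open positive orthant. -/

import Mathlib

/-- The single constitutive constraint for the internal kink of Section 2:
`φ(z) = (z₁z₂)²` on the closed nonnegative orthant and `φ(z) = -(z₁z₂)²` elsewhere. -/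
noncomputable def kinkPhi (z : ℝ × ℝ) : ℝ :=
  if 0 ≤ z.1 ∧ 0 ≤ z.2 then (z.1 * z.2) ^ 2 else -(z.1 * z.2) ^ 2

open Asymptotics Filter

private lemma sq_deriv_zero (z : ℝ × ℝ) (hz : z.1 * z.2 = 0) :
    HasFDerivAt (fun w : ℝ × ℝ => (w.1 * w.2) ^ 2) (0 : (ℝ × ℝ) →L[ℝ] ℝ) z := by
  have hf : HasFDerivAt (fun w : ℝ × ℝ => w.1) (ContinuousLinearMap.fst ℝ ℝ ℝ) z :=
    hasFDerivAt_fst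
  have hs : HasFDerivAt (fun w : ℝ × ℝ => w.2) (ContinuousLinearMap.snd ℝ ℝ ℝ) z :=
    hasFDerivAt_snd
  have h1 := hf.mul hs
  have h2 := h1.mul h1
  have h3 : HasFDerivAt (fun w : ℝ × ℝ => (w.1 * w.2) * (w.1 * w.2))
      (0 : (ℝ × ℝ) →L[ℝ] ℝ) z := by
    exact h2.congr_fderiv (by simp [hz])
  have he : (fun w : ℝ × ℝ => (w.1 * w.2) ^ 2)
      = fun w : ℝ × ℝ => (w.1 * w.2) * (w.1 * w.2) := by
    funext w; ring
  rw [he]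
  exact h3

private lemma kinkPhi_zero (z : ℝ × ℝ) (hz : z.1 * z.2 = 0) : kinkPhi z = 0 := by
  unfold kinkPhi; split_ifs <;> simp [hz]

private lemma kinkPhi_deriv_zero (z : ℝ × ℝ) (hz : z.1 * z.2 = 0) :
    HasFDerivAt kinkPhi (0 : (ℝ × ℝ) →L[ℝ] ℝ) z := by
  have hg := sq_deriv_zero z hz
  rw [hasFDerivAt_iff_isLittleO_nhds_zero] at hg ⊢
  have hkz : kinkPhi z = 0 := kinkPhi_zero z hz
  have hnorm : ∀ h : ℝ × ℝ,
      ‖kinkPhi (z + h) - kinkPhi z - (0 : ℝ × ℝ →L[ℝ] ℝ) h‖ =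
      ‖((z + h).1 * (z + h).2) ^ 2 - (z.1 * z.2) ^ 2 - (0 : ℝ × ℝ →L[ℝ] ℝ) h‖ := by
    intro h
    rw [hkz, hz]
    simp only [ContinuousLinearMap.zero_apply, sub_zero, ne_eq, OfNat.ofNat_ne_zero,
      not_false_eq_true, zero_pow]
    unfold kinkPhi
    split_ifs with hc
    · rfl
    · exact norm_neg _
  have hn := hg.norm_left
  rw [show (fun h : ℝ × ℝ => ‖((z + h).1 * (z + h).2) ^ 2 - (z.1 * z.2) ^ 2
        - (0 : ℝ × ℝ →L[ℝ] ℝ) h‖)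
      = fun h : ℝ × ℝ => ‖kinkPhi (z + h) - kinkPhi z - (0 : ℝ × ℝ →L[ℝ] ℝ) h‖
      from funext fun h => (hnorm h).symm] at hn
  exact hn.of_norm_left

private lemma kinkPhi_diff : Differentiable ℝ kinkPhi := by
  intro z
  by_cases hz : z.1 * z.2 = 0
  · exact (kinkPhi_deriv_zero z hz).differentiableAt
  · have h1 : z.1 ≠ 0 := fun h => hz (by simp [h])
    have h2 : z.2 ≠ 0 := fun h => hz (by simp [h])
    have hgdiff : Differentiable ℝ (fun w : ℝ × ℝ => (w.1 * w.2) ^ 2) :=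
      (differentiable_fst.mul differentiable_snd).pow 2
    by_cases hp : 0 < z.1 ∧ 0 < z.2
    · have hmem : {w : ℝ × ℝ | 0 < w.1 ∧ 0 < w.2} ∈ nhds z := by
        refine IsOpen.mem_nhds ?_ hp
        exact (isOpen_lt continuous_const continuous_fst).inter
          (isOpen_lt continuous_const continuous_snd)
      have heq : kinkPhi =ᶠ[nhds z] fun w : ℝ × ℝ => (w.1 * w.2) ^ 2 :=
        eventuallyEq_of_mem hmem fun w hw => by
          simp [kinkPhi, hw.1.le, hw.2.le]
      exact (hgdiff z).congr_of_eventuallyEq heq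
    · have hn : z.1 < 0 ∨ z.2 < 0 := by
        rcases lt_or_gt_of_ne h1 with h | h
        · exact Or.inl h
        · rcases lt_or_gt_of_ne h2 with h' | h'
          · exact Or.inr h'
          · exact absurd ⟨h, h'⟩ hp
      have hmem : {w : ℝ × ℝ | w.1 < 0 ∨ w.2 < 0} ∈ nhds z := by
        refine IsOpen.mem_nhds ?_ hn
        exact (isOpen_lt continuous_fst continuous_const).union
          (isOpen_lt continuous_snd continuous_const)
      have heq : kinkPhi =ᶠ[nhds z] fun w : ℝ × ℝ => -(w.1 * w.2) ^ 2 :=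
        eventuallyEq_of_mem hmem fun w hw => by
          have : ¬(0 ≤ w.1 ∧ 0 ≤ w.2) := by
            rcases hw with h | h
            · exact fun hc => absurd hc.1 (not_le.mpr h)
            · exact fun hc => absurd hc.2 (not_le.mpr h)
          simp [kinkPhi, this]
      exact ((hgdiff z).neg).congr_of_eventuallyEq heq

theorem kinkPhi_properties :
    (Differentiable ℝ kinkPhi
      ∧ ∀ z : ℝ × ℝ, z.1 * z.2 = 0 → fderiv ℝ kinkPhi z = 0)
    ∧ {z : ℝ × ℝ | kinkPhi z ≤ 0} = {z : ℝ × ℝ | 0 < z.1 ∧ 0 < z.2}ᶜ := by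
  refine ⟨⟨kinkPhi_diff, fun z hz => (kinkPhi_deriv_zero z hz).fderiv⟩, ?_⟩
  ext z
  simp only [Set.mem_setOf_eq, Set.mem_compl_iff]
  constructor
  · intro h hp
    have hval : kinkPhi z = (z.1 * z.2) ^ 2 := if_pos ⟨hp.1.le, hp.2.le⟩
    have : 0 < (z.1 * z.2) ^ 2 := pow_pos (mul_pos hp.1 hp.2) 2
    rw [hval] at h
    linarith
  · intro h
    by_cases hc : 0 ≤ z.1 ∧ 0 ≤ z.2
    · have hz : z.1 * z.2 = 0 := by
        push_neg at h
        rcases eq_or_lt_of_le hc.1 with h1 | h1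
        · simp [← h1]
        · have h2 : z.2 = 0 := le_antisymm (h h1) hc.2
          simp [h2]
      rw [kinkPhi_zero z hz]
    · have hval : kinkPhi z = -(z.1 * z.2) ^ 2 := if_neg hc
      rw [hval]
      exact neg_nonpos.mpr (sq_nonneg _)
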